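/- arXiv:2403.12355 — 2 statements merged into one kernel-verified Lean document; each statement's English description precedes it below -/
import Mathlib

section
/- Let G be a finite group generated by a symmetric set S ⊆ G, let G₂ = [G,G], let D := Diam_S(G₂) be the diameter of G₂ in the Cayley graph of G with generating set S, and let P_t be the heat kernel of the simple random walk. Then for every t ≥ 0, (1/2)·∑_{y ∈ G} | P_t(1, y) − (1/|G₂|)·∑_{h ∈ G₂} P_t(h, y) | ≤ (|G|/2)·exp( −t / ( |S|·D² ) ). -/
open scoped BigOperators
open scoped Classical

noncomputable section

/-- A subset of a group is symmetric if it is closed under taking inverses. -/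
def SymmSet {G : Type*} [Group G] (S : Set G) : Prop := ∀ s : G, s ∈ S ↔ s⁻¹ ∈ S

/-- The word length of `g` with respect to `S`: the least `n` such that `g` is a product
of a list of `n` elements of `S`. -/
def wordLength {G : Type*} [Group G] (S : Set G) (g : G) : ℕ :=
  sInf {n | ∃ l : List G, (∀ x ∈ l, x ∈ S) ∧ l.length = n ∧ l.prod = g}

/-- The diameter of a subset `H` of `G` in the Cayley graph of `G` w.r.t. `S`. -/
def setDiam {G : Type*} [Group G] (S H : Set G) : ℕ := sSup (wordLength S '' H)

/-- `Diam_S(H/N)`: the least `D` such that every `h ∈ H` can be written as `h = w * u` with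
`u ∈ N` and `w` a product of at most `D` elements of `S`. -/
def quotDiam {G : Type*} [Group G] (S H N : Set G) : ℕ :=
  sInf {D | ∀ h ∈ H, ∃ l : List G, (∀ x ∈ l, x ∈ S) ∧ l.length ≤ D ∧ ∃ u ∈ N, h = l.prod * u}

/-- `G` has rank `r`: `r` is the least `n` such that some set of `n` elements of `G`
together with their inverses generates `G`. -/
def HasRank (G : Type*) [Group G] (r : ℕ) : Prop :=
  IsLeast {n | ∃ T : Finset G, T.card = n ∧ Subgroup.closure ((T : Set G) ∪ (T : Set G)⁻¹) = ⊤} r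

/-- `G` is nilpotent of nilpotency class exactly `L`; with the paper's indexing
`G_i := lowerCentralSeries G (i-1)`, this says `G_{L+1} = {1} ≠ G_L`. -/
def NilpotencyClassEq (G : Type*) [Group G] (L : ℕ) : Prop :=
  (⊤ : Subgroup G).lowerCentralSeries L = ⊥ ∧ (⊤ : Subgroup G).lowerCentralSeries (L - 1) ≠ ⊥

/-- Transition matrix of the simple random walk on the Cayley graph `Cay(G,S)`. -/
def transMatrix {G : Type*} [Group G] [Fintype G] (S : Set G) : Matrix G G ℝ :=
  fun x y => if x⁻¹ * y ∈ S then ((S.ncard : ℝ))⁻¹ else 0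

/-- Heat kernel `P_t = exp (t (K - I))` of the simple random walk on `Cay(G,S)`. -/
def heatKernel {G : Type*} [Group G] [Fintype G] (S : Set G) (t : ℝ) : Matrix G G ℝ :=
  NormedSpace.exp (t • (transMatrix S - 1))

/-- Transition matrix of the projected walk on `G ⧸ N`. -/
def quotTransMatrix {G : Type*} [Group G] (S : Set G) (N : Subgroup G) [N.Normal] :
    Matrix (G ⧸ N) (G ⧸ N) ℝ :=
  fun C C' => (({s ∈ S | C * (QuotientGroup.mk s : G ⧸ N) = C'}).ncard : ℝ) / (S.ncard : ℝ)

/-- Heat kernel of the projected walk on `G ⧸ N`. -/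
def quotHeatKernel {G : Type*} [Group G] [Fintype G] (S : Set G) (N : Subgroup G) [N.Normal]
    (t : ℝ) : Matrix (G ⧸ N) (G ⧸ N) ℝ :=
  letI : Fintype (G ⧸ N) := Fintype.ofFinite _
  NormedSpace.exp (t • (quotTransMatrix S N - 1))

/-- `ε`-mixing time of the simple random walk on `Cay(G,S)` started at the identity. -/
def mixingTime {G : Type*} [Group G] [Fintype G] (S : Set G) (ε : ℝ) : ℝ :=
  sInf {t : ℝ | 0 ≤ t ∧ (∑ y : G, |heatKernel S t 1 y - (Fintype.card G : ℝ)⁻¹|) / 2 ≤ ε}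

/-- `ε`-mixing time of the projected walk on `G ⧸ N` started at the identity coset. -/
def quotMixingTime {G : Type*} [Group G] [Fintype G] (S : Set G) (N : Subgroup G) [N.Normal]
    (ε : ℝ) : ℝ :=
  letI : Fintype (G ⧸ N) := Fintype.ofFinite _
  sInf {t : ℝ | 0 ≤ t ∧
    (∑ C : G ⧸ N, |quotHeatKernel S N t 1 C - (Nat.card (G ⧸ N) : ℝ)⁻¹|) / 2 ≤ ε}

/-- Second-largest eigenvalue of a symmetric stochastic matrix, via the variational
characterization over mean-zero functions. -/
def secondEig {X : Type*} [Fintype X] (K : Matrix X X ℝ) : ℝ :=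
  sSup {r : ℝ | ∃ f : X → ℝ, f ≠ 0 ∧ (∑ x, f x) = 0 ∧
    r = (∑ x, ∑ y, f x * K x y * f y) / (∑ x, (f x) ^ 2)}

/-- Relaxation time `1/(1-λ)`. -/
def relaxTime {X : Type*} [Fintype X] (K : Matrix X X ℝ) : ℝ := 1 / (1 - secondEig K)

/-- Relaxation time of the projected walk on `G ⧸ N`. -/
def quotRelaxTime {G : Type*} [Group G] [Fintype G] (S : Set G) (N : Subgroup G) [N.Normal] : ℝ :=
  letI : Fintype (G ⧸ N) := Fintype.ofFinite _
  relaxTime (quotTransMatrix S N)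

/-- The paper's commutator `[x,y] = x⁻¹ y⁻¹ x y`. -/
def pcomm {G : Type*} [Group G] (x y : G) : G := x⁻¹ * y⁻¹ * x * y

/-- Iterated commutator `ρ(x, y₁, …, y_k) = [⋯[[x,y₁],y₂]⋯, y_k]`. -/
def rho {G : Type*} [Group G] (x : G) (l : List G) : G := l.foldl pcomm x

/-- Word length in `G` modulo `N`: the least `n` such that `g = w * u` with `u ∈ N` and
`w` a product of `n` elements of `S`. -/
def quotLength {G : Type*} [Group G] (S N : Set G) (g : G) : ℕ :=
  sInf {n | ∃ l : List G, (∀ x ∈ l, x ∈ S) ∧ l.length = n ∧ ∃ u ∈ N, g = l.prod * u}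


section TVAux
open Matrix
set_option linter.unusedSectionVars false
set_option maxHeartbeats 1000000

section

variable {G : Type*} [Group G] [Fintype G]

private lemma tv_exists_word (S : Set G) (hS : SymmSet S) (hgen : Subgroup.closure S = ⊤)
    (g : G) : ∃ l : List G, (∀ x ∈ l, x ∈ S) ∧ l.prod = g := by
  have hg : g ∈ Subgroup.closure S := by rw [hgen]; exact Subgroup.mem_top g
  induction hg using Subgroup.closure_induction with
  | mem s hs => exact ⟨[s], by simp [hs]⟩
  | one => exact ⟨[], by simp⟩
  | mul x y hx hy ihx ihy =>
      obtain ⟨l1, h1, p1⟩ := ihx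
      obtain ⟨l2, h2, p2⟩ := ihy
      exact ⟨l1 ++ l2, by
        constructor
        · intro z hz; rcases List.mem_append.1 hz with h | h
          exacts [h1 z h, h2 z h]
        · simp [p1, p2]⟩
  | inv x hx ihx =>
      obtain ⟨l, hl, pl⟩ := ihx
      refine ⟨(l.reverse).map (·⁻¹), ?_, ?_⟩
      · intro z hz
        simp only [List.mem_map, List.mem_reverse] at hz
        obtain ⟨y, hy, rfl⟩ := hz
        exact (hS y).1 (hl y hy)
      · rw [List.map_reverse, ← List.prod_inv_reverse, pl]

private lemma tv_path_bound (w : G → ℝ) (T : Finset G) (l : List G) (hl : ∀ x ∈ l, x ∈ T) :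
    ∑ x : G, (w (x * l.prod) - w x) ^ 2 ≤
      (l.length : ℝ) ^ 2 * ∑ s ∈ T, ∑ x : G, (w (x * s) - w x) ^ 2 := by
  set E := ∑ s ∈ T, ∑ x : G, (w (x * s) - w x) ^ 2 with hE
  have hEnn : ∀ s ∈ T, 0 ≤ ∑ x : G, (w (x * s) - w x) ^ 2 :=
    fun s _ => Finset.sum_nonneg fun x _ => sq_nonneg _
  have hslice : ∀ s ∈ T, ∑ x : G, (w (x * s) - w x) ^ 2 ≤ E :=
    fun s hs => Finset.single_le_sum hEnn hs
  have tele : ∀ x : G, w (x * l.prod) - w x =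
      ∑ i ∈ Finset.range l.length,
        (w (x * (l.take (i+1)).prod) - w (x * (l.take i).prod)) := by
    intro x
    rw [Finset.sum_range_sub (fun i => w (x * (l.take i).prod))]
    simp
  have pointwise : ∀ x : G, (w (x * l.prod) - w x) ^ 2 ≤
      (l.length : ℝ) * ∑ i ∈ Finset.range l.length,
        (w (x * (l.take (i+1)).prod) - w (x * (l.take i).prod)) ^ 2 := by
    intro x
    rw [tele x]
    have := sq_sum_le_card_mul_sum_sq
      (s := Finset.range l.length)
      (f := fun i => w (x * (l.take (i+1)).prod) - w (x * (l.take i).prod))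
    simpa using this
  calc ∑ x : G, (w (x * l.prod) - w x) ^ 2
      ≤ ∑ x : G, (l.length : ℝ) * ∑ i ∈ Finset.range l.length,
        (w (x * (l.take (i+1)).prod) - w (x * (l.take i).prod)) ^ 2 :=
        Finset.sum_le_sum fun x _ => pointwise x
    _ = (l.length : ℝ) * ∑ i ∈ Finset.range l.length,
        ∑ x : G, (w (x * (l.take (i+1)).prod) - w (x * (l.take i).prod)) ^ 2 := by
        rw [← Finset.mul_sum, Finset.sum_comm]
    _ ≤ (l.length : ℝ) * ∑ i ∈ Finset.range l.length, E := by
        apply mul_le_mul_of_nonneg_left _ (by positivity)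
        apply Finset.sum_le_sum
        intro i hi
        have hi' : i < l.length := Finset.mem_range.1 hi
        have hstep : ∀ x : G, w (x * (l.take (i+1)).prod) - w (x * (l.take i).prod)
            = w ((x * (l.take i).prod) * l[i]) - w (x * (l.take i).prod) := by
          intro x
          rw [List.prod_take_succ l i hi', ← mul_assoc]
        calc ∑ x : G, (w (x * (l.take (i+1)).prod) - w (x * (l.take i).prod)) ^ 2
            = ∑ x : G, (w ((x * (l.take i).prod) * l[i]) - w (x * (l.take i).prod)) ^ 2 := by
              simp_rw [hstep]
          _ = ∑ x : G, (w (x * l[i]) - w x) ^ 2 :=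
              Equiv.sum_comp (Equiv.mulRight (l.take i).prod)
                (fun x => (w (x * l[i]) - w x) ^ 2)
          _ ≤ E := hslice _ (hl _ (l.getElem_mem hi'))
    _ = (l.length : ℝ) ^ 2 * E := by
        rw [Finset.sum_const, Finset.card_range]
        push_cast
        ring

private lemma tv_poincare (w : G → ℝ) (T Hs : Finset G) (hHs : Hs.Nonempty)
    (hzero : ∀ c : G, ∑ h ∈ Hs, w (c * h) = 0) (D : ℕ)
    (hword : ∀ h ∈ Hs, ∃ l : List G, (∀ x ∈ l, x ∈ T) ∧ l.length ≤ D ∧ l.prod = h) :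
    2 * ∑ x : G, w x ^ 2 ≤
      (D : ℝ) ^ 2 * ∑ s ∈ T, ∑ x : G, (w (x * s) - w x) ^ 2 := by
  set E := ∑ s ∈ T, ∑ x : G, (w (x * s) - w x) ^ 2 with hE
  have key : ∀ h ∈ Hs, ∑ x : G, (w (x * h) - w x) ^ 2 ≤ (D : ℝ) ^ 2 * E := by
    intro h hh
    obtain ⟨l, hlT, hlen, hprod⟩ := hword h hh
    calc ∑ x : G, (w (x * h) - w x) ^ 2
        = ∑ x : G, (w (x * l.prod) - w x) ^ 2 := by rw [hprod]
      _ ≤ (l.length : ℝ) ^ 2 * E := tv_path_bound w T l hlT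
      _ ≤ (D : ℝ) ^ 2 * E := by
          apply mul_le_mul_of_nonneg_right _ (by positivity)
          have : (l.length : ℝ) ≤ (D : ℝ) := by exact_mod_cast hlen
          nlinarith [Nat.cast_nonneg (α := ℝ) l.length]
  have ident : ∑ h ∈ Hs, ∑ x : G, (w (x * h) - w x) ^ 2
      = 2 * Hs.card * ∑ x : G, w x ^ 2 := by
    have expand : ∀ h : G, ∑ x : G, (w (x * h) - w x) ^ 2
        = 2 * ∑ x : G, w x ^ 2 - 2 * ∑ x : G, w x * w (x * h) := by
      intro h
      have h1 : ∑ x : G, w (x * h) ^ 2 = ∑ x : G, w x ^ 2 :=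
        Equiv.sum_comp (Equiv.mulRight h) (fun x => w x ^ 2)
      calc ∑ x : G, (w (x * h) - w x) ^ 2
          = ∑ x : G, (w (x * h) ^ 2 + w x ^ 2 - 2 * (w x * w (x * h))) := by
            apply Finset.sum_congr rfl; intros; ring
        _ = 2 * ∑ x : G, w x ^ 2 - 2 * ∑ x : G, w x * w (x * h) := by
            rw [Finset.sum_sub_distrib, Finset.sum_add_distrib, h1, ← Finset.mul_sum]; ring
    have cross : ∑ h ∈ Hs, ∑ x : G, w x * w (x * h) = 0 := by
      rw [Finset.sum_comm]
      have : ∀ x : G, ∑ h ∈ Hs, w x * w (x * h) = 0 := by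
        intro x
        rw [← Finset.mul_sum, hzero x, mul_zero]
      simp [this]
    calc ∑ h ∈ Hs, ∑ x : G, (w (x * h) - w x) ^ 2
        = ∑ h ∈ Hs, (2 * ∑ x : G, w x ^ 2 - 2 * ∑ x : G, w x * w (x * h)) :=
          Finset.sum_congr rfl fun h _ => expand h
      _ = Hs.card * (2 * ∑ x : G, w x ^ 2) - 2 * ∑ h ∈ Hs, ∑ x : G, w x * w (x * h) := by
          rw [Finset.sum_sub_distrib, Finset.sum_const, ← Finset.mul_sum]
          push_cast
          ring
      _ = 2 * Hs.card * ∑ x : G, w x ^ 2 := by rw [cross]; ring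
  have hcard : (0 : ℝ) < Hs.card := by exact_mod_cast Finset.card_pos.2 hHs
  have main : 2 * Hs.card * ∑ x : G, w x ^ 2 ≤ Hs.card * ((D : ℝ) ^ 2 * E) := by
    rw [← ident]
    calc ∑ h ∈ Hs, ∑ x : G, (w (x * h) - w x) ^ 2
        ≤ ∑ h ∈ Hs, (D : ℝ) ^ 2 * E := Finset.sum_le_sum key
      _ = Hs.card * ((D : ℝ) ^ 2 * E) := by rw [Finset.sum_const]; push_cast; ring
  nlinarith

/-- Convolution-type matrix with uniform weight on `U`. -/
private def tvConvMat (U : Set G) : Matrix G G ℝ :=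
  fun x y => if x⁻¹ * y ∈ U then ((U.ncard : ℝ))⁻¹ else 0

private lemma tvConvMat_mulVec (U : Set G) (w : G → ℝ) (x : G) :
    (tvConvMat U).mulVec w x
      = ((U.ncard : ℝ))⁻¹ * ∑ u ∈ (Set.toFinite U).toFinset, w (x * u) := by
  classical
  have h1 : (tvConvMat U).mulVec w x
      = ∑ y : G, (if x⁻¹ * y ∈ U then ((U.ncard : ℝ))⁻¹ else 0) * w y := rfl
  rw [h1]
  have h2 : ∑ y : G, (if x⁻¹ * y ∈ U then ((U.ncard : ℝ))⁻¹ else 0) * w y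
      = ∑ u : G, (if u ∈ U then ((U.ncard : ℝ))⁻¹ else 0) * w (x * u) := by
    rw [← Equiv.sum_comp (Equiv.mulLeft x)
      (fun y => (if x⁻¹ * y ∈ U then ((U.ncard : ℝ))⁻¹ else 0) * w y)]
    simp [Equiv.mulLeft]
  have h3 : ∀ u : G, (if u ∈ U then ((U.ncard : ℝ))⁻¹ else 0) * w (x * u)
      = if u ∈ (Set.toFinite U).toFinset then ((U.ncard : ℝ))⁻¹ * w (x * u) else 0 := by
    intro u
    simp only [Set.Finite.mem_toFinset]
    by_cases h : u ∈ U <;> simp [h]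
  rw [h2, Finset.sum_congr rfl (fun u _ => h3 u), Finset.sum_ite_mem, Finset.univ_inter,
    Finset.mul_sum]

private lemma tvConvMat_symm (U : Set G) (hU : ∀ s : G, s ∈ U ↔ s⁻¹ ∈ U) :
    (tvConvMat U)ᵀ = tvConvMat U := by
  ext x y
  have h : y⁻¹ * x ∈ U ↔ x⁻¹ * y ∈ U := by
    rw [hU (y⁻¹ * x)]; simp
  simp [tvConvMat, Matrix.transpose_apply, h]

private lemma tvConvMat_comm_normal (U : Set G) (N : Subgroup G) [hN : N.Normal] :
    tvConvMat U * tvConvMat (N : Set G) = tvConvMat (N : Set G) * tvConvMat U := by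
  ext x y
  rw [Matrix.mul_apply, Matrix.mul_apply]
  refine Fintype.sum_bijective (fun z => y * z⁻¹ * x)
    ((Equiv.inv G).trans ((Equiv.mulLeft y).trans (Equiv.mulRight x))).bijective
    _ _ (fun z => ?_)
  have h1 : x⁻¹ * (y * z⁻¹ * x) ∈ N ↔ z⁻¹ * y ∈ N := by
    rw [show x⁻¹ * (y * z⁻¹ * x) = (x⁻¹ * (y * z⁻¹)) * x by group, hN.mem_comm_iff,
      mul_inv_cancel_left, hN.mem_comm_iff]
  have h2 : (y * z⁻¹ * x)⁻¹ * y ∈ U ↔ x⁻¹ * z ∈ U := by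
    rw [show (y * z⁻¹ * x)⁻¹ * y = x⁻¹ * (z * y⁻¹) * y by group,
      show x⁻¹ * (z * y⁻¹) * y = x⁻¹ * z by group]
  show tvConvMat U x z * tvConvMat (N : Set G) z y
      = tvConvMat (N : Set G) x (y * z⁻¹ * x) * tvConvMat U (y * z⁻¹ * x) y
  simp only [tvConvMat, SetLike.mem_coe, h1, h2]
  ring

private lemma tv_dirichlet (U : Set G) (hU : U.Nonempty) (w : G → ℝ) :
    ∑ x : G, w x * ((1 - tvConvMat U).mulVec w) x
      = (2 * (U.ncard : ℝ))⁻¹ *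
        ∑ s ∈ (Set.toFinite U).toFinset, ∑ x : G, (w (x * s) - w x) ^ 2 := by
  classical
  set Tf := (Set.toFinite U).toFinset with hTf
  set c : ℝ := ((U.ncard : ℝ))⁻¹ with hc
  have hcard : U.ncard = Tf.card := Set.ncard_eq_toFinset_card U (Set.toFinite U)
  have hTne : Tf.Nonempty := by
    obtain ⟨u, hu⟩ := hU
    exact ⟨u, (Set.Finite.mem_toFinset _).2 hu⟩
  have hn0 : (U.ncard : ℝ) ≠ 0 := by
    rw [hcard]; exact_mod_cast (Finset.card_pos.2 hTne).ne'
  have hmv : ∀ x : G, (1 - tvConvMat U).mulVec w x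
      = w x - c * ∑ u ∈ Tf, w (x * u) := by
    intro x
    rw [Matrix.sub_mulVec]
    simp only [Pi.sub_apply, Matrix.one_mulVec]
    rw [tvConvMat_mulVec]
  have lhs_eq : ∑ x : G, w x * ((1 - tvConvMat U).mulVec w) x
      = ∑ x : G, w x ^ 2 - c * ∑ s ∈ Tf, ∑ x : G, w x * w (x * s) := by
    have hterm : ∀ x : G, w x * ((1 - tvConvMat U).mulVec w) x
        = w x ^ 2 - ∑ u ∈ Tf, c * (w x * w (x * u)) := by
      intro x
      rw [hmv x, mul_sub, Finset.mul_sum, Finset.mul_sum]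
      congr 1
      · ring
      · apply Finset.sum_congr rfl; intros; ring
    rw [Finset.sum_congr rfl (fun x _ => hterm x), Finset.sum_sub_distrib]
    congr 1
    rw [Finset.sum_comm, Finset.mul_sum]
    apply Finset.sum_congr rfl
    intro s _
    rw [Finset.mul_sum]
  have rhs_expand : ∑ s ∈ Tf, ∑ x : G, (w (x * s) - w x) ^ 2
      = 2 * Tf.card * ∑ x : G, w x ^ 2 - 2 * ∑ s ∈ Tf, ∑ x : G, w x * w (x * s) := by
    have expand : ∀ s : G, ∑ x : G, (w (x * s) - w x) ^ 2
        = 2 * ∑ x : G, w x ^ 2 - 2 * ∑ x : G, w x * w (x * s) := by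
      intro s
      have h1 : ∑ x : G, w (x * s) ^ 2 = ∑ x : G, w x ^ 2 :=
        Equiv.sum_comp (Equiv.mulRight s) (fun x => w x ^ 2)
      calc ∑ x : G, (w (x * s) - w x) ^ 2
          = ∑ x : G, (w (x * s) ^ 2 + w x ^ 2 - 2 * (w x * w (x * s))) := by
            apply Finset.sum_congr rfl; intros; ring
        _ = 2 * ∑ x : G, w x ^ 2 - 2 * ∑ x : G, w x * w (x * s) := by
            rw [Finset.sum_sub_distrib, Finset.sum_add_distrib, h1, ← Finset.mul_sum]; ring
    rw [Finset.sum_congr rfl (fun s _ => expand s), Finset.sum_sub_distrib,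
      Finset.sum_const, ← Finset.mul_sum]
    push_cast
    ring
  rw [lhs_eq, rhs_expand]
  rw [hc]
  rw [hcard] at hn0 ⊢
  field_simp

private lemma tv_hasDerivAt_exp_aux (A : Matrix G G ℝ) (f : G → ℝ) (y : G) (t : ℝ) :
    HasDerivAt (fun u : ℝ => (NormedSpace.exp (u • A)).mulVec f y)
      ((A.mulVec ((NormedSpace.exp (t • A)).mulVec f)) y) t := by
  letI : SeminormedRing (Matrix G G ℝ) := Matrix.linftyOpSemiNormedRing
  letI : NormedRing (Matrix G G ℝ) := Matrix.linftyOpNormedRing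
  letI : NormedAlgebra ℝ (Matrix G G ℝ) := Matrix.linftyOpNormedAlgebra
  have hexp : HasDerivAt (fun u : ℝ => NormedSpace.exp (u • A))
      (A * NormedSpace.exp (t • A)) t := hasDerivAt_exp_smul_const' A t
  let L : Matrix G G ℝ →ₗ[ℝ] ℝ :=
    { toFun := fun M => M.mulVec f y
      map_add' := by
        intro M N
        simp [Matrix.add_mulVec, Pi.add_apply]
      map_smul' := by
        intro c M
        simp [Matrix.smul_mulVec, Pi.smul_apply] }
  let Lc : Matrix G G ℝ →L[ℝ] ℝ := LinearMap.toContinuousLinearMap L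
  have hcomp := Lc.hasFDerivAt.comp_hasDerivAt t hexp
  have : Lc (A * NormedSpace.exp (t • A))
      = (A.mulVec ((NormedSpace.exp (t • A)).mulVec f)) y := by
    show ((A * NormedSpace.exp (t • A)).mulVec f) y = _
    rw [Matrix.mulVec_mulVec]
  replace hcomp := hcomp.congr_deriv this
  exact hcomp

private lemma tv_sq_norm_decay (A : Matrix G G ℝ) (f : G → ℝ) (g : ℝ)
    (hdir : ∀ u : ℝ,
      ∑ x : G, ((NormedSpace.exp (u • A)).mulVec f x) *
          (A.mulVec ((NormedSpace.exp (u • A)).mulVec f)) x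
        ≤ -g * ∑ x : G, ((NormedSpace.exp (u • A)).mulVec f x) ^ 2)
    (t : ℝ) (ht : 0 ≤ t) :
    ∑ x : G, ((NormedSpace.exp (t • A)).mulVec f x) ^ 2
      ≤ (∑ x : G, f x ^ 2) * Real.exp (-(2 * g * t)) := by
  set v : ℝ → G → ℝ := fun u => (NormedSpace.exp (u • A)).mulVec f with hv
  set Q : ℝ → ℝ := fun u => ∑ x : G, v u x ^ 2 with hQ
  have hQder : ∀ u : ℝ, HasDerivAt Q (∑ x : G, 2 * v u x * (A.mulVec (v u)) x) u := by
    intro u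
    have : HasDerivAt (fun r => ∑ x : G, v r x ^ 2)
        (∑ x : G, 2 * v u x * (A.mulVec (v u)) x) u := by
      apply HasDerivAt.fun_sum
      intro x _
      have h2 := (tv_hasDerivAt_exp_aux A f x u).pow 2
      norm_num [← Matrix.mulVec_mulVec] at h2
      exact h2
    exact this
  set φ : ℝ → ℝ := fun u => Q u * Real.exp (2 * g * u) with hφ
  have hφder : ∀ u : ℝ, HasDerivAt φ
      ((∑ x : G, 2 * v u x * (A.mulVec (v u)) x) * Real.exp (2 * g * u)
        + Q u * (Real.exp (2 * g * u) * (2 * g))) u := by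
    intro u
    have hlin : HasDerivAt (fun r : ℝ => 2 * g * r) (2 * g) u := by
      simpa using (hasDerivAt_id u).const_mul (2 * g)
    exact (hQder u).mul hlin.exp
  have hφ' : ∀ u : ℝ, deriv φ u ≤ 0 := by
    intro u
    rw [(hφder u).deriv]
    have hd := hdir u
    have hQnn : 0 ≤ Q u := Finset.sum_nonneg fun x _ => sq_nonneg _
    have hsum : ∑ x : G, 2 * v u x * (A.mulVec (v u)) x
        = 2 * ∑ x : G, v u x * (A.mulVec (v u)) x := by
      rw [Finset.mul_sum]; apply Finset.sum_congr rfl; intros; ring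
    have hepos : (0:ℝ) < Real.exp (2 * g * u) := Real.exp_pos _
    rw [hsum]
    have : 2 * ∑ x : G, v u x * (A.mulVec (v u)) x ≤ -(2 * g) * Q u := by
      rw [hQ]; nlinarith [hd]
    nlinarith [this, hepos, hQnn]
  have hanti : Antitone φ :=
    antitone_of_deriv_nonpos (fun u => (hφder u).differentiableAt) hφ'
  have h0 : φ t ≤ φ 0 := hanti ht
  have hQ0 : Q 0 = ∑ x : G, f x ^ 2 := by
    simp [hQ, hv, Matrix.one_mulVec, NormedSpace.exp_zero]
  rw [hφ] at h0
  simp only [mul_zero, Real.exp_zero, mul_one] at h0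
  rw [hQ0] at h0
  have hepos : (0:ℝ) < Real.exp (2 * g * t) := Real.exp_pos _
  have : Q t ≤ (∑ x : G, f x ^ 2) / Real.exp (2 * g * t) := by
    rw [le_div_iff₀ hepos]; exact h0
  calc Q t ≤ (∑ x : G, f x ^ 2) / Real.exp (2 * g * t) := this
    _ = (∑ x : G, f x ^ 2) * Real.exp (-(2 * g * t)) := by
        rw [Real.exp_neg, div_eq_mul_inv]

end

end TVAux


open Matrix

/-- Lemma `commutator_mixing`: the total variation distance between the walk
started at the identity and the walk started uniform on `G₂` decays like
`(|G|/2)·exp(-t/(|S|·Diam_S(G₂)²))`. -/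
theorem tv_identity_vs_uniform_commutator (G : Type*) [Group G] [Fintype G]
    (S : Set G) (hS : SymmSet S) (hgen : Subgroup.closure S = ⊤) (t : ℝ) (ht : 0 ≤ t) :
    (∑ y : G,
        |heatKernel S t 1 y -
          (∑ h : ↥(commutator G), heatKernel S t (h : G) y) / (Nat.card (commutator G) : ℝ)|) / 2 ≤
      (Fintype.card G : ℝ) / 2 *
        Real.exp (-t / ((S.ncard : ℝ) * (setDiam S (commutator G : Set G) : ℝ) ^ 2)) := by
  classical
  by_cases hbot : commutator G = ⊥
  · -- trivial commutator: the two distributions coincide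
    have hone : ∀ h : ↥(commutator G), (h : G) = (1 : G) := by
      intro h
      have hh : (h : G) ∈ (⊥ : Subgroup G) := by rw [← hbot]; exact h.2
      exact Subgroup.mem_bot.1 hh
    have hcard0 : (Nat.card ↥(commutator G) : ℝ) ≠ 0 := by
      have : 0 < Nat.card ↥(commutator G) := Nat.card_pos
      exact_mod_cast this.ne'
    have hz : ∀ y : G, heatKernel S t 1 y -
        (∑ h : ↥(commutator G), heatKernel S t (h : G) y) / (Nat.card ↥(commutator G) : ℝ)
          = 0 := by
      intro y
      have hsum : (∑ h : ↥(commutator G), heatKernel S t (h : G) y)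
          = (Nat.card ↥(commutator G) : ℝ) * heatKernel S t 1 y := by
        rw [Nat.card_eq_fintype_card]
        calc ∑ h : ↥(commutator G), heatKernel S t (h : G) y
            = ∑ _h : ↥(commutator G), heatKernel S t 1 y :=
              Finset.sum_congr rfl (fun h _ => by rw [hone h])
          _ = (Fintype.card ↥(commutator G) : ℝ) * heatKernel S t 1 y := by
              rw [Finset.sum_const, Finset.card_univ, nsmul_eq_mul]
      rw [hsum]
      field_simp
      simp
    have hL : (∑ y : G, |heatKernel S t 1 y -
        (∑ h : ↥(commutator G), heatKernel S t (h : G) y) /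
          (Nat.card ↥(commutator G) : ℝ)|) = 0 := by
      apply Finset.sum_eq_zero
      intro y _
      rw [hz y, abs_zero]
    rw [hL, zero_div]
    positivity
  · -- main case
    obtain ⟨h₀, h₀mem, h₀ne⟩ : ∃ x ∈ commutator G, x ≠ 1 := by
      by_contra hcon
      push_neg at hcon
      exact hbot ((Subgroup.eq_bot_iff_forall _).2 hcon)
    set Tf : Finset G := (Set.toFinite S).toFinset with hTf
    set Hs : Finset G := (Set.toFinite ((commutator G : Subgroup G) : Set G)).toFinset with hHs
    have hmemHs : ∀ {h : G}, h ∈ Hs ↔ h ∈ commutator G := by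
      intro h
      rw [hHs, Set.Finite.mem_toFinset, SetLike.mem_coe]
    have hmemTf : ∀ {s : G}, s ∈ Tf ↔ s ∈ S := by
      intro s
      rw [hTf, Set.Finite.mem_toFinset]
    have h1Hs : (1 : G) ∈ Hs := hmemHs.2 (one_mem _)
    have hHsne : Hs.Nonempty := ⟨1, h1Hs⟩
    have hn2pos : 0 < Hs.card := Finset.card_pos.2 hHsne
    have hn2R : (0 : ℝ) < (Hs.card : ℝ) := by exact_mod_cast hn2pos
    have hNcard : (Nat.card ↥(commutator G)) = Hs.card := by
      rw [hHs, Set.Finite.card_toFinset, ← Nat.card_eq_fintype_card, SetLike.coe_sort_coe]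
    have hSne : S.Nonempty := by
      obtain ⟨l, hl, hp⟩ := tv_exists_word S hS hgen h₀
      cases l with
      | nil => simp at hp; exact absurd hp (Ne.symm h₀ne)
      | cons a l' => exact ⟨a, hl a (by simp)⟩
    have hscard : 0 < S.ncard := (Set.ncard_pos (Set.toFinite S)).2 hSne
    have hsR : (0 : ℝ) < (S.ncard : ℝ) := by exact_mod_cast hscard
    set D : ℕ := setDiam S ((commutator G : Subgroup G) : Set G) with hD
    have hwordset : ∀ g : G,
        {n | ∃ l : List G, (∀ x ∈ l, x ∈ S) ∧ l.length = n ∧ l.prod = g}.Nonempty := by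
      intro g
      obtain ⟨l, hl, hp⟩ := tv_exists_word S hS hgen g
      exact ⟨l.length, l, hl, rfl, hp⟩
    have hwlen_le : ∀ h : G, h ∈ commutator G → wordLength S h ≤ D := by
      intro h hh
      apply le_csSup ((Set.toFinite _).bddAbove)
      exact ⟨h, SetLike.mem_coe.2 hh, rfl⟩
    have hword : ∀ h ∈ Hs, ∃ l : List G, (∀ x ∈ l, x ∈ Tf) ∧ l.length ≤ D ∧ l.prod = h := by
      intro h hh
      obtain ⟨l, hl, hlen, hp⟩ := Nat.sInf_mem (hwordset h)
      refine ⟨l, fun x hx => hmemTf.2 (hl x hx), ?_, hp⟩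
      have : l.length = wordLength S h := hlen
      rw [this]
      exact hwlen_le h (hmemHs.1 hh)
    have hD1 : 1 ≤ D := by
      have hne0 : wordLength S h₀ ≠ 0 := by
        intro h0
        obtain ⟨l, hl, hlen, hp⟩ := Nat.sInf_mem (hwordset h₀)
        have hl0 : l.length = 0 := by
          have : l.length = wordLength S h₀ := hlen
          rw [this, h0]
        have : l = [] := List.length_eq_zero_iff.1 hl0
        rw [this] at hp
        simp at hp
        exact h₀ne hp.symm
      calc 1 ≤ wordLength S h₀ := Nat.one_le_iff_ne_zero.2 hne0
        _ ≤ D := hwlen_le h₀ h₀mem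
    have hDR : (0 : ℝ) < (D : ℝ) := by
      have : 0 < D := hD1
      exact_mod_cast this
    set A : Matrix G G ℝ := transMatrix S - 1 with hA
    have hKconv : transMatrix S = tvConvMat S := rfl
    set gr : ℝ := ((S.ncard : ℝ) * (D : ℝ) ^ 2)⁻¹ with hgr
    have hgrpos : 0 < gr := by rw [hgr]; positivity
    set f₀ : G → ℝ := fun x => (if x = 1 then (1 : ℝ) else 0) -
      (if x ∈ commutator G then ((Hs.card : ℝ))⁻¹ else 0) with hf₀
    have hzero : ∀ c : G, ∑ h ∈ Hs, f₀ (c * h) = 0 := by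
      intro c
      rw [hf₀]
      simp only
      rw [Finset.sum_sub_distrib]
      by_cases hc : c ∈ commutator G
      · have hfirst : ∑ h ∈ Hs, (if c * h = 1 then (1 : ℝ) else 0) = 1 := by
          have hcond : ∀ h : G, (c * h = 1) ↔ (h = c⁻¹) := by
            intro h
            constructor
            · intro hh
              exact eq_inv_of_mul_eq_one_right hh
            · intro hh
              simp [hh]
          calc ∑ h ∈ Hs, (if c * h = 1 then (1 : ℝ) else 0)
              = ∑ h ∈ Hs, (if h = c⁻¹ then (1 : ℝ) else 0) := by
                apply Finset.sum_congr rfl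
                intro h _
                simp only [hcond h]
            _ = 1 := by
                rw [Finset.sum_ite_eq' Hs c⁻¹ (fun _ => (1 : ℝ))]
                simp [hmemHs.2 (inv_mem hc)]
        have hsecond : ∑ h ∈ Hs, (if c * h ∈ commutator G then ((Hs.card : ℝ))⁻¹ else 0)
            = 1 := by
          have : ∀ h ∈ Hs, (if c * h ∈ commutator G then ((Hs.card : ℝ))⁻¹ else 0)
              = ((Hs.card : ℝ))⁻¹ := by
            intro h hh
            rw [if_pos (mul_mem hc (hmemHs.1 hh))]
          rw [Finset.sum_congr rfl this, Finset.sum_const, nsmul_eq_mul,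
            mul_inv_cancel₀ hn2R.ne']
        rw [hfirst, hsecond, sub_self]
      · have hfirst : ∑ h ∈ Hs, (if c * h = 1 then (1 : ℝ) else 0) = 0 := by
          apply Finset.sum_eq_zero
          intro h hh
          rw [if_neg]
          intro hch
          apply hc
          rw [eq_inv_of_mul_eq_one_left hch]
          exact inv_mem (hmemHs.1 hh)
        have hsecond : ∑ h ∈ Hs, (if c * h ∈ commutator G then ((Hs.card : ℝ))⁻¹ else 0)
            = 0 := by
          apply Finset.sum_eq_zero
          intro h hh
          rw [if_neg]
          intro hch
          apply hc
          rw [← mul_inv_cancel_right c h]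
          exact mul_mem hch (inv_mem (hmemHs.1 hh))
        rw [hfirst, hsecond, sub_self]
    set R : Matrix G G ℝ := tvConvMat ((commutator G : Subgroup G) : Set G) with hR
    have hNscard : (((commutator G : Subgroup G) : Set G).ncard) = Hs.card :=
      Set.ncard_eq_toFinset_card _ (Set.toFinite _)
    have hRmv : ∀ (w : G → ℝ) (x : G), R.mulVec w x
        = ((Hs.card : ℝ))⁻¹ * ∑ h ∈ Hs, w (x * h) := by
      intro w x
      rw [hR, tvConvMat_mulVec, hNscard]
    have hRf₀ : R.mulVec f₀ = 0 := by
      funext x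
      rw [hRmv f₀ x, hzero x, mul_zero]
      rfl
    have hcommKR : Commute (transMatrix S) R := by
      rw [hKconv, hR]
      exact tvConvMat_comm_normal S (commutator G)
    have hcommAR : Commute A R := by
      rw [hA]
      exact hcommKR.sub_left (Commute.one_left R)
    have hvzero : ∀ (u : ℝ) (x : G),
        ∑ h ∈ Hs, ((NormedSpace.exp (u • A)).mulVec f₀) (x * h) = 0 := by
      intro u x
      have hPR : Commute (NormedSpace.exp (u • A)) R := (hcommAR.smul_left u).exp_left
      have h5 : R.mulVec ((NormedSpace.exp (u • A)).mulVec f₀) = 0 := by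
        rw [Matrix.mulVec_mulVec, ← hPR.eq, ← Matrix.mulVec_mulVec, hRf₀,
          Matrix.mulVec_zero]
      have h6 := congrFun h5 x
      rw [hRmv _ x] at h6
      have h7 : ((Hs.card : ℝ))⁻¹ ≠ 0 := inv_ne_zero hn2R.ne'
      have := mul_eq_zero.1 h6
      tauto
    have hdir : ∀ u : ℝ,
        ∑ x : G, ((NormedSpace.exp (u • A)).mulVec f₀ x) *
            (A.mulVec ((NormedSpace.exp (u • A)).mulVec f₀)) x
          ≤ -gr * ∑ x : G, ((NormedSpace.exp (u • A)).mulVec f₀ x) ^ 2 := by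
      intro u
      set w : G → ℝ := (NormedSpace.exp (u • A)).mulVec f₀ with hw
      have hpoin := tv_poincare w Tf Hs hHsne (hvzero u) D hword
      have hdirich := tv_dirichlet S hSne w
      have hAw : ∀ x : G, (A.mulVec w) x = -(((1 - tvConvMat S).mulVec w) x) := by
        intro x
        rw [hA, hKconv, show (tvConvMat S - 1 : Matrix G G ℝ) = -(1 - tvConvMat S) by
          rw [neg_sub], Matrix.neg_mulVec]
        rfl
      have hsum : ∑ x : G, w x * (A.mulVec w) x
          = -((2 * (S.ncard : ℝ))⁻¹ * ∑ s ∈ Tf, ∑ x : G, (w (x * s) - w x) ^ 2) := by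
        rw [← hdirich, ← Finset.sum_neg_distrib]
        apply Finset.sum_congr rfl
        intro x _
        rw [hAw x]
        ring
      set E := ∑ s ∈ Tf, ∑ x : G, (w (x * s) - w x) ^ 2 with hE
      set a := ∑ x : G, w x ^ 2 with ha
      have hEnn : 0 ≤ E :=
        Finset.sum_nonneg fun s _ => Finset.sum_nonneg fun x _ => sq_nonneg _
      have hann : 0 ≤ a := Finset.sum_nonneg fun x _ => sq_nonneg _
      rw [hsum, hgr]
      have hkey : ((S.ncard : ℝ) * (D : ℝ) ^ 2)⁻¹ * a ≤ (2 * (S.ncard : ℝ))⁻¹ * E := by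
        rw [inv_eq_one_div, inv_eq_one_div, div_mul_eq_mul_div, div_mul_eq_mul_div,
          one_mul, one_mul, div_le_div_iff₀ (by positivity) (by positivity)]
        nlinarith [mul_le_mul_of_nonneg_left hpoin (le_of_lt hsR)]
      linarith
    have hdecay := tv_sq_norm_decay A f₀ gr hdir t ht
    have hQ0 : ∑ x : G, f₀ x ^ 2 ≤ (Fintype.card G : ℝ) := by
      have hbd : ∀ x : G, f₀ x ^ 2 ≤ 1 := by
        intro x
        rw [hf₀]
        simp only
        have hb0 : (0 : ℝ) ≤ (if x ∈ commutator G then ((Hs.card : ℝ))⁻¹ else 0) := by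
          positivity
        have hb1 : (if x ∈ commutator G then ((Hs.card : ℝ))⁻¹ else 0) ≤ 1 := by
          split
          · rw [inv_le_one_iff₀]
            right
            exact_mod_cast hn2pos
          · norm_num
        have ha0 : (0 : ℝ) ≤ (if x = 1 then (1 : ℝ) else 0) := by positivity
        have ha1 : (if x = 1 then (1 : ℝ) else 0) ≤ 1 := by split <;> norm_num
        nlinarith
      calc ∑ x : G, f₀ x ^ 2 ≤ ∑ _x : G, (1 : ℝ) := Finset.sum_le_sum fun x _ => hbd x
        _ = (Fintype.card G : ℝ) := by
            rw [Finset.sum_const, Finset.card_univ, nsmul_eq_mul, mul_one]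
    have hident : ∀ y : G, heatKernel S t 1 y -
        (∑ h : ↥(commutator G), heatKernel S t (h : G) y) / (Nat.card ↥(commutator G) : ℝ)
          = ((NormedSpace.exp (t • A)).mulVec f₀) y := by
      intro y
      have hP : heatKernel S t = NormedSpace.exp (t • A) := rfl
      set P := NormedSpace.exp (t • A) with hPdef
      have hsymmA : (t • A)ᵀ = t • A := by
        rw [Matrix.transpose_smul, hA, Matrix.transpose_sub, Matrix.transpose_one, hKconv,
          tvConvMat_symm S hS]
      have hsymm : Pᵀ = P := by
        rw [hPdef, ← Matrix.exp_transpose, hsymmA]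
      have hPsym : ∀ a b : G, P a b = P b a := by
        intro a b
        conv_lhs => rw [← hsymm]
        rfl
      have hmv : P.mulVec f₀ y = P y 1 - ((Hs.card : ℝ))⁻¹ * ∑ x ∈ Hs, P y x := by
        have h1 : P.mulVec f₀ y = ∑ x : G, P y x * f₀ x := rfl
        rw [h1, hf₀]
        simp only [mul_sub]
        rw [Finset.sum_sub_distrib]
        congr 1
        · calc ∑ x : G, P y x * (if x = 1 then (1 : ℝ) else 0)
              = ∑ x : G, (if x = 1 then P y x else 0) := by
                apply Finset.sum_congr rfl
                intro x _
                by_cases h : x = 1 <;> simp [h]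
            _ = P y 1 := by rw [Finset.sum_ite_eq' Finset.univ (1 : G)]; simp
        · calc ∑ x : G, P y x * (if x ∈ commutator G then ((Hs.card : ℝ))⁻¹ else 0)
              = ∑ x : G, (if x ∈ Hs then ((Hs.card : ℝ))⁻¹ * P y x else 0) := by
                apply Finset.sum_congr rfl
                intro x _
                by_cases h : x ∈ commutator G
                · rw [if_pos h, if_pos (hmemHs.2 h)]; ring
                · rw [if_neg h, if_neg (fun hx => h (hmemHs.1 hx)), mul_zero]
            _ = ∑ x ∈ Hs, ((Hs.card : ℝ))⁻¹ * P y x := by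
                rw [Finset.sum_ite_mem, Finset.univ_inter]
            _ = ((Hs.card : ℝ))⁻¹ * ∑ x ∈ Hs, P y x := by rw [Finset.mul_sum]
      have hsub : (∑ h : ↥(commutator G), heatKernel S t (h : G) y) = ∑ x ∈ Hs, P x y := by
        have : ∀ x : G, heatKernel S t x y = P x y := fun x => by rw [hP]
        simp_rw [this]
        exact (Finset.sum_subtype Hs (fun x => hmemHs) (fun x => P x y)).symm
      rw [hsub, hP, hmv, hNcard]
      have hswap : ∑ x ∈ Hs, P x y = ∑ x ∈ Hs, P y x :=
        Finset.sum_congr rfl fun x _ => hPsym x y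
      rw [hswap, hPsym 1 y]
      ring
    -- Cauchy–Schwarz and conclusion
    set L := ∑ y : G, |((NormedSpace.exp (t • A)).mulVec f₀) y| with hLdef
    have hLnn : 0 ≤ L := Finset.sum_nonneg fun y _ => abs_nonneg _
    have hCS : L ^ 2 ≤ (Fintype.card G : ℝ) *
        ∑ y : G, (((NormedSpace.exp (t • A)).mulVec f₀) y) ^ 2 := by
      have := Finset.sum_mul_sq_le_sq_mul_sq Finset.univ (fun _ : G => (1 : ℝ))
        (fun y => |((NormedSpace.exp (t • A)).mulVec f₀) y|)
      simpa [hLdef, Finset.card_univ, sq_abs] using this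
    have hexpnn : (0 : ℝ) ≤ Real.exp (-(2 * gr * t)) := (Real.exp_pos _).le
    have hQt : ∑ y : G, (((NormedSpace.exp (t • A)).mulVec f₀) y) ^ 2
        ≤ (Fintype.card G : ℝ) * Real.exp (-(2 * gr * t)) :=
      le_trans hdecay (mul_le_mul_of_nonneg_right hQ0 hexpnn)
    have hL2 : L ^ 2 ≤ ((Fintype.card G : ℝ) * Real.exp (-(gr * t))) ^ 2 := by
      have h1 : L ^ 2 ≤ (Fintype.card G : ℝ) *
          ((Fintype.card G : ℝ) * Real.exp (-(2 * gr * t))) :=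
        le_trans hCS (mul_le_mul_of_nonneg_left hQt (Nat.cast_nonneg _))
      have h2 : ((Fintype.card G : ℝ) * Real.exp (-(gr * t))) ^ 2
          = (Fintype.card G : ℝ) * ((Fintype.card G : ℝ) * Real.exp (-(2 * gr * t))) := by
        rw [mul_pow, sq (Real.exp _), ← Real.exp_add,
          show -(gr * t) + -(gr * t) = -(2 * gr * t) by ring]
        ring
      rw [h2]
      exact h1
    have hLle : L ≤ (Fintype.card G : ℝ) * Real.exp (-(gr * t)) := by
      have hrhs : (0 : ℝ) ≤ (Fintype.card G : ℝ) * Real.exp (-(gr * t)) := by positivity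
      nlinarith [hL2, hLnn, hrhs]
    have hgoalL : (∑ y : G, |heatKernel S t 1 y -
        (∑ h : ↥(commutator G), heatKernel S t (h : G) y) /
          (Nat.card ↥(commutator G) : ℝ)|) = L := by
      rw [hLdef]
      apply Finset.sum_congr rfl
      intro y _
      rw [hident y]
    have hexp_eq : Real.exp (-t / ((S.ncard : ℝ) * (D : ℝ) ^ 2)) = Real.exp (-(gr * t)) := by
      congr 1
      rw [hgr]
      field_simp
    rw [hgoalL, hexp_eq]
    linarith

end
end

section
/- Let G be a finite group generated by a symmetric set S ⊆ G, let G₂ = [G,G], let D := Diam_S(G₂) be the diameter of G₂ in the Cayley graph of G with generating set S, and let P_t be the heat kernel of the simple random walk. Let f : G → ℝ satisfy ∑_{x ∈ G₂·g} f(x) = 0 for every g ∈ G (the sum of f over each coset of G₂ vanishes). Then for every t ≥ 0, ‖P_t f‖₂ ≤ ‖f‖₂ · exp( −t / ( |S|·D² ) ), where (P_t f)(x) := ∑_{y ∈ G} P_t(x,y)·f(y) and ‖f‖₂ := ( (1/|G|)·∑_{x ∈ G} f(x)² )^{1/2}. -/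
open scoped BigOperators
open scoped Classical

noncomputable section

section lemmas
variable {G : Type*} [Group G] [Fintype G]

lemma transMatrix_mulVec (S : Set G) (g : G → ℝ) (x : G) :
    (transMatrix S).mulVec g x = ∑ s ∈ S.toFinset, (S.ncard : ℝ)⁻¹ * g (x * s) := by
  have h1 : (transMatrix S).mulVec g x
      = ∑ y : G, (if x⁻¹ * y ∈ S then (S.ncard : ℝ)⁻¹ else 0) * g y := rfl
  rw [h1, ← Equiv.sum_comp (Equiv.mulLeft x)
    (fun y => (if x⁻¹ * y ∈ S then (S.ncard : ℝ)⁻¹ else 0) * g y)]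
  simp only [Equiv.coe_mulLeft, inv_mul_cancel_left, ite_mul, zero_mul]
  rw [Finset.sum_ite, Finset.sum_const_zero, add_zero]
  apply Finset.sum_congr
  · ext s; simp
  · intros; rfl

end lemmas

section lemmas2
variable {G : Type*} [Group G] [Fintype G]

lemma sum_shift (c : G) (F : G → ℝ) : ∑ x : G, F (x * c) = ∑ x : G, F x :=
  Equiv.sum_comp (Equiv.mulRight c) F

lemma dirichlet (S : Set G) (hs0 : S.toFinset.Nonempty) (g : G → ℝ) :
    ∑ x : G, (g x - (transMatrix S).mulVec g x) * g x
      = (2 * (S.ncard : ℝ))⁻¹ * ∑ x : G, ∑ s ∈ S.toFinset, (g x - g (x * s)) ^ 2 := by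
  have hcard : (S.ncard : ℝ) = (S.toFinset.card : ℝ) := by
    rw [Set.ncard_eq_toFinset_card']
  have hσ : (S.ncard : ℝ) ≠ 0 := by
    rw [hcard]
    exact_mod_cast Finset.card_ne_zero_of_mem hs0.choose_spec
  have expand : ∀ x : G, ∑ s ∈ S.toFinset, (g x - g (x * s)) ^ 2
      = (S.ncard : ℝ) * g x ^ 2 - 2 * (g x * ∑ s ∈ S.toFinset, g (x * s))
        + ∑ s ∈ S.toFinset, g (x * s) ^ 2 := by
    intro x
    rw [Finset.sum_congr rfl (fun s _ => by ring :
      ∀ s ∈ S.toFinset, (g x - g (x * s)) ^ 2 = g x ^ 2 - 2 * (g x * g (x * s)) + g (x * s) ^ 2)]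
    rw [Finset.sum_add_distrib, Finset.sum_sub_distrib, Finset.sum_const, ← Finset.mul_sum,
      nsmul_eq_mul, hcard, Finset.mul_sum]
    congr 2
    simp [Finset.mul_sum]
  have third : ∑ x : G, ∑ s ∈ S.toFinset, g (x * s) ^ 2 = (S.ncard : ℝ) * ∑ x : G, g x ^ 2 := by
    rw [Finset.sum_comm]
    rw [Finset.sum_congr rfl (fun s _ => sum_shift s (fun z => g z ^ 2))]
    rw [Finset.sum_const, nsmul_eq_mul, hcard]
  have lhs : ∀ x : G, (g x - (transMatrix S).mulVec g x) * g x
      = g x ^ 2 - (S.ncard : ℝ)⁻¹ * (g x * ∑ s ∈ S.toFinset, g (x * s)) := by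
    intro x
    rw [transMatrix_mulVec, ← Finset.mul_sum]
    ring
  rw [Finset.sum_congr rfl (fun x _ => lhs x), Finset.sum_congr rfl (fun x _ => expand x)]
  rw [Finset.sum_add_distrib, Finset.sum_sub_distrib, third, Finset.sum_sub_distrib,
    ← Finset.mul_sum, ← Finset.mul_sum, ← Finset.mul_sum]
  field_simp
  ring

end lemmas2

section lemmas3
variable {G : Type*} [Group G] [Fintype G]

lemma transMatrix_symm (S : Set G) (hS : SymmSet S) (u v : G → ℝ) :
    ∑ x : G, (transMatrix S).mulVec u x * v x = ∑ x : G, u x * (transMatrix S).mulVec v x := by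
  have key : ∀ s ∈ S.toFinset, ∑ x : G, u (x * s) * v x
      = ∑ x : G, u x * v (x * s⁻¹) := by
    intro s _
    have := sum_shift (G := G) s (fun z => u z * v (z * s⁻¹))
    simpa using this
  calc ∑ x : G, (transMatrix S).mulVec u x * v x
      = ∑ s ∈ S.toFinset, ∑ x : G, (S.ncard : ℝ)⁻¹ * (u (x * s) * v x) := by
        rw [Finset.sum_comm]
        exact Finset.sum_congr rfl fun x _ => by
          rw [transMatrix_mulVec, Finset.sum_mul]
          exact Finset.sum_congr rfl fun s _ => by ring
    _ = ∑ s ∈ S.toFinset, ∑ x : G, (S.ncard : ℝ)⁻¹ * (u x * v (x * s⁻¹)) := by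
        refine Finset.sum_congr rfl fun s hs => ?_
        rw [← Finset.mul_sum, ← Finset.mul_sum, key s hs]
    _ = ∑ s ∈ S.toFinset, ∑ x : G, (S.ncard : ℝ)⁻¹ * (u x * v (x * s)) := by
        refine Finset.sum_nbij' (fun s => s⁻¹) (fun s => s⁻¹) ?_ ?_ ?_ ?_ ?_
        · intro s hs; simp only [Set.mem_toFinset] at *; exact (hS s).mp hs
        · intro s hs; simp only [Set.mem_toFinset] at *; exact (hS s).mp hs
        · intro s _; simp
        · intro s _; simp
        · intro s _; simp
    _ = ∑ x : G, u x * (transMatrix S).mulVec v x := by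
        rw [Finset.sum_comm]
        exact Finset.sum_congr rfl fun x _ => by
          rw [transMatrix_mulVec, Finset.mul_sum]
          exact Finset.sum_congr rfl fun s _ => by ring

lemma mulVec_coset_zero (S : Set G) (g : G → ℝ)
    (hg : ∀ a : G, ∑ h : ↥(commutator G), g ((h : G) * a) = 0) (a : G) :
    ∑ h : ↥(commutator G), (transMatrix S).mulVec g ((h : G) * a) = 0 := by
  have : ∀ h : ↥(commutator G), (transMatrix S).mulVec g ((h : G) * a)
      = ∑ s ∈ S.toFinset, (S.ncard : ℝ)⁻¹ * g ((h : G) * (a * s)) := by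
    intro h
    rw [transMatrix_mulVec]
    exact Finset.sum_congr rfl fun s _ => by rw [mul_assoc]
  rw [Finset.sum_congr rfl fun h _ => this h, Finset.sum_comm]
  simp [← Finset.mul_sum, hg]

end lemmas3

section lemmas4
variable {G : Type*} [Group G] [Fintype G]

lemma exists_word (S : Set G) (hS : SymmSet S) (hgen : Subgroup.closure S = ⊤) (γ : G) :
    ∃ l : List G, (∀ x ∈ l, x ∈ S) ∧ l.length = wordLength S γ ∧ l.prod = γ := by
  have hmem : γ ∈ Subgroup.closure S := by rw [hgen]; trivial
  have hmem2 : γ ∈ Submonoid.closure (S ∪ S⁻¹) := by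
    rw [← Subgroup.closure_toSubmonoid]; exact hmem
  obtain ⟨l, hl, hprod⟩ := Submonoid.exists_list_of_mem_closure hmem2
  have hl' : ∀ x ∈ l, x ∈ S := by
    intro x hx
    rcases hl x hx with h | h
    · exact h
    · exact (hS x).mpr (by simpa using h)
  have hmem3 : l.length ∈ {n | ∃ l : List G, (∀ x ∈ l, x ∈ S) ∧ l.length = n ∧ l.prod = γ} :=
    ⟨l, hl', rfl, hprod⟩
  exact Nat.sInf_mem ⟨l.length, hmem3⟩

lemma wordLength_le_setDiam (S : Set G) {H : Set G} {γ : G} (hγ : γ ∈ H) :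
    wordLength S γ ≤ setDiam S H :=
  le_csSup ((H.toFinite.image _).bddAbove) ⟨γ, hγ, rfl⟩

lemma poincare (S : Set G) (hS : SymmSet S) (hgen : Subgroup.closure S = ⊤) (g : G → ℝ)
    (hg : ∀ a : G, ∑ h : ↥(commutator G), g ((h : G) * a) = 0) :
    2 * ∑ x : G, g x ^ 2 ≤ ((setDiam S (commutator G : Set G) : ℝ)) ^ 2 *
      ∑ x : G, ∑ s ∈ S.toFinset, (g x - g (x * s)) ^ 2 := by
  set D := setDiam S (commutator G : Set G) with hD
  set Etot := ∑ x : G, ∑ s ∈ S.toFinset, (g x - g (x * s)) ^ 2 with hEtot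
  have hES : ∀ s ∈ S.toFinset, ∀ c : G, ∑ x : G, (g (x * c) - g ((x * c) * s)) ^ 2 ≤ Etot := by
    intro s hs c
    have h1 : ∑ x : G, (g (x * c) - g ((x * c) * s)) ^ 2 = ∑ x : G, (g x - g (x * s)) ^ 2 :=
      sum_shift c (fun z => (g z - g (z * s)) ^ 2)
    rw [h1, hEtot, Finset.sum_comm]
    refine Finset.single_le_sum (f := fun s' => ∑ x : G, (g x - g (x * s')) ^ 2)
      (fun s' _ => Finset.sum_nonneg fun x _ => sq_nonneg _) hs
  have hEtot_nonneg : 0 ≤ Etot :=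
    Finset.sum_nonneg fun x _ => Finset.sum_nonneg fun s _ => sq_nonneg _
  -- per-γ bound
  have key : ∀ γ : ↥(commutator G), ∑ x : G, (g x - g (x * (γ : G))) ^ 2 ≤ (D : ℝ) ^ 2 * Etot := by
    intro γ
    obtain ⟨l, hlS, hlen, hprod⟩ := exists_word S hS hgen (γ : G)
    have hlenD : l.length ≤ D := by rw [hlen]; exact wordLength_le_setDiam S γ.2
    have step : ∀ x : G, (g x - g (x * (γ : G))) ^ 2 ≤ (l.length : ℝ) *
        ∑ i ∈ Finset.range l.length,
          (g (x * (l.take i).prod) - g (x * (l.take (i + 1)).prod)) ^ 2 := by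
      intro x
      have tel : g x - g (x * (γ : G)) = ∑ i ∈ Finset.range l.length,
          (g (x * (l.take i).prod) - g (x * (l.take (i + 1)).prod)) := by
        rw [Finset.sum_range_sub' (f := fun i => g (x * (l.take i).prod))]
        simp [hprod]
      calc (g x - g (x * (γ : G))) ^ 2
          = (∑ i ∈ Finset.range l.length,
              (g (x * (l.take i).prod) - g (x * (l.take (i + 1)).prod))) ^ 2 := by rw [tel]
        _ ≤ _ := by
            have := sq_sum_le_card_mul_sum_sq
              (s := Finset.range l.length)
              (f := fun i => g (x * (l.take i).prod) - g (x * (l.take (i + 1)).prod))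
            simpa using this
    calc ∑ x : G, (g x - g (x * (γ : G))) ^ 2
        ≤ ∑ x : G, (l.length : ℝ) * ∑ i ∈ Finset.range l.length,
            (g (x * (l.take i).prod) - g (x * (l.take (i + 1)).prod)) ^ 2 :=
          Finset.sum_le_sum fun x _ => step x
      _ = (l.length : ℝ) * ∑ i ∈ Finset.range l.length, ∑ x : G,
            (g (x * (l.take i).prod) - g (x * (l.take (i + 1)).prod)) ^ 2 := by
          rw [← Finset.mul_sum, Finset.sum_comm]
      _ ≤ (l.length : ℝ) * ∑ i ∈ Finset.range l.length, Etot := by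
          refine mul_le_mul_of_nonneg_left (Finset.sum_le_sum fun i hi => ?_) (by positivity)
          rw [Finset.mem_range] at hi
          have hsi : l[i] ∈ S.toFinset := Set.mem_toFinset.mpr (hlS _ (l.getElem_mem hi))
          have := hES l[i] hsi (l.take i).prod
          calc ∑ x : G, (g (x * (l.take i).prod) - g (x * (l.take (i + 1)).prod)) ^ 2
              = ∑ x : G, (g (x * (l.take i).prod) - g ((x * (l.take i).prod) * l[i])) ^ 2 := by
                refine Finset.sum_congr rfl fun x _ => ?_
                rw [List.prod_take_succ _ _ hi, mul_assoc]
            _ ≤ Etot := this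
      _ ≤ (D : ℝ) ^ 2 * Etot := by
          rw [Finset.sum_const, Finset.card_range, nsmul_eq_mul]
          have h1 : (l.length : ℝ) ≤ (D : ℝ) := by exact_mod_cast hlenD
          have h2 : (0 : ℝ) ≤ (l.length : ℝ) := by positivity
          have h3 : (0:ℝ) ≤ ((D:ℝ) * (D:ℝ) - (l.length:ℝ) * (l.length:ℝ)) * Etot :=
            mul_nonneg (by nlinarith) hEtot_nonneg
          nlinarith [h3]
  -- variance identity
  have var : ∑ x : G, ∑ γ : ↥(commutator G), (g x - g (x * (γ : G))) ^ 2
      = 2 * (Fintype.card ↥(commutator G) : ℝ) * ∑ x : G, g x ^ 2 := by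
    have hzero : ∀ x : G, ∑ γ : ↥(commutator G), g (x * (γ : G)) = 0 := by
      intro x
      have := Fintype.sum_equiv (MulAut.conjNormal (H := commutator G) x).toEquiv
        (fun γ : ↥(commutator G) => g (x * (γ : G)))
        (fun h : ↥(commutator G) => g ((h : G) * x)) ?_
      · rw [this, hg x]
      · intro γ
        have : ((MulAut.conjNormal (H := commutator G) x γ : ↥(commutator G)) : G)
            = x * (γ : G) * x⁻¹ := MulAut.conjNormal_apply x γ
        simp only [MulEquiv.toEquiv_eq_coe, MulEquiv.coe_toEquiv, this]
        group
    have hthird : ∀ γ : ↥(commutator G), ∑ x : G, g (x * (γ : G)) ^ 2 = ∑ x : G, g x ^ 2 :=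
      fun γ => sum_shift (γ : G) (fun z => g z ^ 2)
    have expand : ∑ x : G, ∑ γ : ↥(commutator G), (g x - g (x * (γ : G))) ^ 2
        = ∑ x : G, ((Fintype.card ↥(commutator G) : ℝ) * g x ^ 2
            + ∑ γ : ↥(commutator G), g (x * (γ : G)) ^ 2) := by
      refine Finset.sum_congr rfl fun x _ => ?_
      rw [Finset.sum_congr rfl (fun γ _ => by ring :
        ∀ γ ∈ (Finset.univ : Finset ↥(commutator G)), (g x - g (x * (γ : G))) ^ 2
          = g x ^ 2 - 2 * (g x * g (x * (γ : G))) + g (x * (γ : G)) ^ 2)]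
      rw [Finset.sum_add_distrib, Finset.sum_sub_distrib, Finset.sum_const, nsmul_eq_mul,
        Finset.card_univ]
      have : ∑ γ : ↥(commutator G), 2 * (g x * g (x * (γ : G)))
          = 2 * (g x * ∑ γ : ↥(commutator G), g (x * (γ : G))) := by
        simp [Finset.mul_sum]
      rw [this, hzero x]
      ring
    rw [expand, Finset.sum_add_distrib, ← Finset.mul_sum, Finset.sum_comm]
    rw [Finset.sum_congr rfl fun γ (_ : γ ∈ (Finset.univ : Finset ↥(commutator G))) => hthird γ]
    rw [Finset.sum_const, Finset.card_univ, nsmul_eq_mul]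
    ring
  -- combine
  have hcardpos : (0 : ℝ) < (Fintype.card ↥(commutator G) : ℝ) := by
    exact_mod_cast Fintype.card_pos
  have chain : 2 * (Fintype.card ↥(commutator G) : ℝ) * ∑ x : G, g x ^ 2
      ≤ (Fintype.card ↥(commutator G) : ℝ) * ((D : ℝ) ^ 2 * Etot) := by
    rw [← var, Finset.sum_comm]
    calc ∑ γ : ↥(commutator G), ∑ x : G, (g x - g (x * (γ : G))) ^ 2
        ≤ ∑ γ : ↥(commutator G), (D : ℝ) ^ 2 * Etot := Finset.sum_le_sum fun γ _ => key γ
      _ = _ := by rw [Finset.sum_const, Finset.card_univ, nsmul_eq_mul]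
  nlinarith [chain, hcardpos]

end lemmas4

open NormedSpace in
lemma exp_mulVec_eig {n : Type*} [Fintype n] [DecidableEq n] (M : Matrix n n ℝ) (v : n → ℝ)
    (μ : ℝ) (h : M.mulVec v = μ • v) :
    (NormedSpace.exp M).mulVec v = Real.exp μ • v := by
  letI : SeminormedRing (Matrix n n ℝ) := Matrix.linftyOpSemiNormedRing
  letI : NormedRing (Matrix n n ℝ) := Matrix.linftyOpNormedRing
  letI : NormedAlgebra ℝ (Matrix n n ℝ) := Matrix.linftyOpNormedAlgebra
  have hpow : ∀ k : ℕ, (M ^ k).mulVec v = μ ^ k • v := by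
    intro k
    induction k with
    | zero => simp [Matrix.one_mulVec]
    | succ k ih =>
        rw [pow_succ, pow_succ, ← Matrix.mulVec_mulVec, h, Matrix.mulVec_smul, ih,
          smul_smul, mul_comm]
  have hs : HasSum (fun k : ℕ => ((Nat.factorial k : ℝ))⁻¹ • M ^ k) (exp M) :=
    NormedSpace.exp_series_hasSum_exp' M
  let L : Matrix n n ℝ →ₗ[ℝ] (n → ℝ) :=
    { toFun := fun A => A.mulVec v
      map_add' := fun A B => Matrix.add_mulVec A B v
      map_smul' := fun c A => Matrix.smul_mulVec c A v }
  have hs2 := hs.mapL (LinearMap.toContinuousLinearMap L)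
  have hs3 : HasSum (fun k : ℕ => ((Nat.factorial k : ℝ))⁻¹ • μ ^ k • v) ((exp M).mulVec v) := by
    simpa [L, hpow, Matrix.smul_mulVec] using hs2
  have hs4 : HasSum (fun k : ℕ => ((Nat.factorial k : ℝ))⁻¹ • μ ^ k • v) (Real.exp μ • v) := by
    have := (NormedSpace.exp_series_hasSum_exp' (𝕂 := ℝ) μ).smul_const v
    rw [Real.exp_eq_exp_ℝ]
    simpa [smul_smul] using this
  exact hs3.unique hs4

set_option maxHeartbeats 2000000 in
/-- inequality `loc_mix`: if `f` sums to zero on every coset of `G₂`, then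
`‖P_t f‖₂ ≤ ‖f‖₂ · exp(-t/(|S|·Diam_S(G₂)²))`. -/
theorem heat_kernel_contraction_on_coset_mean_zero (G : Type*) [Group G] [Fintype G]
    (S : Set G) (hS : SymmSet S) (hgen : Subgroup.closure S = ⊤)
    (f : G → ℝ) (hf : ∀ g : G, (∑ h : ↥(commutator G), f ((h : G) * g)) = 0)
    (t : ℝ) (ht : 0 ≤ t) :
    Real.sqrt ((∑ x : G, (∑ y : G, heatKernel S t x y * f y) ^ 2) / (Fintype.card G : ℝ)) ≤
      Real.sqrt ((∑ x : G, (f x) ^ 2) / (Fintype.card G : ℝ)) *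
        Real.exp (-t / ((S.ncard : ℝ) * (setDiam S (commutator G : Set G) : ℝ) ^ 2)) := by
  classical
  by_cases htriv : commutator G = ⊥
  · have hone : ∀ h : ↥(commutator G), (h : G) = 1 := by
      intro h
      have h2 : (h : G) ∈ (⊥ : Subgroup G) := htriv ▸ h.2
      exact Subgroup.mem_bot.mp h2
    have hf0 : ∀ g : G, f g = 0 := by
      intro g
      have h1 := hf g
      have h2 : ∑ h : ↥(commutator G), f ((h : G) * g)
          = (Fintype.card ↥(commutator G) : ℝ) * f g := by
        rw [Finset.sum_congr rfl fun h _ => by rw [hone h, one_mul]]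
        rw [Finset.sum_const, Finset.card_univ, nsmul_eq_mul]
      rw [h2] at h1
      have hcard : (0 : ℝ) < (Fintype.card ↥(commutator G) : ℝ) := by
        exact_mod_cast Fintype.card_pos
      exact (mul_eq_zero.mp h1).resolve_left (ne_of_gt hcard)
    have : ∀ x : G, ∑ y : G, heatKernel S t x y * f y = 0 := by
      intro x; simp [hf0]
    simp only [this]
    simp [hf0]
  · -- nontrivial commutator
    obtain ⟨γ0, hγ0mem, hγ0ne⟩ : ∃ γ : G, γ ∈ commutator G ∧ γ ≠ 1 := by
      by_contra hc
      push_neg at hc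
      exact htriv (Subgroup.ext fun x => by
        constructor
        · intro hx
          by_cases hx1 : x = 1
          · simpa [hx1] using Subgroup.one_mem _
          · exact absurd (hc x hx) (by simpa using hx1)
        · intro hx
          rw [Subgroup.mem_bot] at hx
          simpa [hx] using Subgroup.one_mem _)
    have hs0 : S.toFinset.Nonempty := by
      rcases Set.eq_empty_or_nonempty S with h | h
      · exfalso
        rw [h, Subgroup.closure_empty] at hgen
        have : γ0 ∈ (⊥ : Subgroup G) := by
          rw [hgen]; trivial
        exact hγ0ne (Subgroup.mem_bot.mp this)
      · exact Set.toFinset_nonempty.mpr h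
    have hσpos : (0 : ℝ) < (S.ncard : ℝ) := by
      rw [Set.ncard_eq_toFinset_card']
      exact_mod_cast Finset.card_pos.mpr hs0
    have hD1 : 1 ≤ setDiam S (commutator G : Set G) := by
      have h1 : 1 ≤ wordLength S γ0 := by
        by_contra hw
        push_neg at hw
        interval_cases hwl : wordLength S γ0
        · obtain ⟨l, hlS, hlen, hprod⟩ := exists_word S hS hgen γ0
          rw [hwl] at hlen
          rw [List.length_eq_zero_iff.mp hlen] at hprod
          exact hγ0ne (hprod.symm.trans rfl ▸ rfl)
      exact le_trans h1 (wordLength_le_setDiam S hγ0mem)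
    set Dr : ℝ := (setDiam S (commutator G : Set G) : ℝ) with hDr
    have hDrpos : (0 : ℝ) < Dr := by
      rw [hDr]; exact_mod_cast hD1
    set X : ℝ := (S.ncard : ℝ) * Dr ^ 2 with hX
    have hXpos : 0 < X := by positivity
    -- the subspace V
    set V : Submodule ℝ (EuclideanSpace ℝ G) :=
      { carrier := {g : EuclideanSpace ℝ G | ∀ a : G, ∑ h : ↥(commutator G), g ((h : G) * a) = 0}
        add_mem' := fun {u v} hu hv a => by
          simp only [PiLp.add_apply]
          rw [Finset.sum_add_distrib, hu a, hv a, add_zero]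
        zero_mem' := fun a => by simp
        smul_mem' := fun c {v} hv a => by
          simp only [PiLp.smul_apply, smul_eq_mul]
          rw [← Finset.mul_sum, hv a, mul_zero] } with hV
    have hmemV : ∀ g : EuclideanSpace ℝ G,
        g ∈ V ↔ ∀ a : G, ∑ h : ↥(commutator G), g ((h : G) * a) = 0 := fun g => Iff.rfl
    have hKV : ∀ g : EuclideanSpace ℝ G, g ∈ V →
        (WithLp.toLp 2 ((transMatrix S).mulVec g) : EuclideanSpace ℝ G) ∈ V := by
      intro g hg
      rw [hmemV] at hg ⊢
      exact mulVec_coset_zero S g hg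
    set T : V →ₗ[ℝ] V :=
      { toFun := fun v => ⟨(WithLp.toLp 2 ((transMatrix S).mulVec v) : EuclideanSpace ℝ G), hKV v v.2⟩
        map_add' := fun u v => Subtype.ext (by simp [Matrix.mulVec_add])
        map_smul' := fun c v => Subtype.ext
          (by simp [Matrix.mulVec_smul]) } with hT
    have hinnerE : ∀ u v : EuclideanSpace ℝ G, (inner ℝ u v : ℝ) = ∑ x : G, u x * v x := by
      intro u v
      rw [PiLp.inner_apply]
      exact Finset.sum_congr rfl fun x _ => by
        simp [RCLike.inner_apply, mul_comm]
    have hTsym : T.IsSymmetric := by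
      intro u v
      rw [Submodule.coe_inner, Submodule.coe_inner, hinnerE, hinnerE]
      exact transMatrix_symm S hS u v
    set nV := Module.finrank ℝ ↥V with hnV
    set B := hTsym.eigenvectorBasis rfl with hB
    set μ := hTsym.eigenvalues rfl with hμ
    have heig : ∀ i, (transMatrix S).mulVec ((B i : EuclideanSpace ℝ G))
        = μ i • (B i : EuclideanSpace ℝ G) := by
      intro i
      have h1 : T (B i) = μ i • B i :=
        (hTsym.hasEigenvector_eigenvectorBasis rfl i).apply_eq_smul
      calc (transMatrix S).mulVec ((B i : EuclideanSpace ℝ G))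
          = ((T (B i) : V) : EuclideanSpace ℝ G) := rfl
        _ = (((μ i • B i : V)) : EuclideanSpace ℝ G) := by rw [h1]
        _ = μ i • (B i : EuclideanSpace ℝ G) := rfl
    have gap : ∀ i, μ i ≤ 1 - 1 / X := by
      intro i
      set b : EuclideanSpace ℝ G := (B i : EuclideanSpace ℝ G) with hb
      have hbV : ∀ a : G, ∑ h : ↥(commutator G), b ((h : G) * a) = 0 := (B i).2
      have hpoin := poincare S hS hgen b hbV
      have hd := dirichlet S hs0 b
      have hmul : ∀ x : G, (transMatrix S).mulVec b x = μ i * b x := by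
        intro x
        rw [heig i]
        rfl
      have hd2 : (1 - μ i) * ∑ x : G, b x ^ 2
          = (2 * (S.ncard : ℝ))⁻¹ * ∑ x : G, ∑ s ∈ S.toFinset, (b x - b (x * s)) ^ 2 := by
        rw [← hd, Finset.mul_sum]
        exact Finset.sum_congr rfl fun x _ => by rw [hmul x]; ring
      have hbne : ∃ x : G, b x ≠ 0 := by
        by_contra hc
        push_neg at hc
        have : b = 0 := WithLp.ofLp_injective 2 (funext hc)
        have hBne : (B i : EuclideanSpace ℝ G) ≠ 0 := by
          simpa [Submodule.coe_eq_zero] using B.toBasis.ne_zero i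
        exact hBne this
      obtain ⟨x0, hx0⟩ := hbne
      have hApos : 0 < ∑ x : G, b x ^ 2 :=
        Finset.sum_pos' (fun x _ => sq_nonneg _) ⟨x0, Finset.mem_univ _, by positivity⟩
      have hE : ∑ x : G, ∑ s ∈ S.toFinset, (b x - b (x * s)) ^ 2
          = 2 * (S.ncard : ℝ) * ((1 - μ i) * ∑ x : G, b x ^ 2) := by
        rw [hd2]
        field_simp
      rw [hE] at hpoin
      have h1 : 1 ≤ (1 - μ i) * X := by
        have hP' : 2 * ∑ x : G, b x ^ 2
            ≤ 2 * ((1 - μ i) * X) * ∑ x : G, b x ^ 2 := by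
          calc 2 * ∑ x : G, b x ^ 2
              ≤ Dr ^ 2 * (2 * (S.ncard : ℝ) * ((1 - μ i) * ∑ x : G, b x ^ 2)) := hpoin
            _ = 2 * ((1 - μ i) * X) * ∑ x : G, b x ^ 2 := by rw [hX]; ring
        nlinarith [hApos, hP']
      have : 1 / X ≤ 1 - μ i := by
        rw [div_le_iff₀ hXpos]
        linarith [h1]
      linarith [this]
    -- expansion of f
    set fV : ↥V := ⟨(WithLp.toLp 2 f : EuclideanSpace ℝ G), hf⟩ with hfV
    set c : Fin nV → ℝ := fun i => B.repr fV i with hc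
    have hfsum : (WithLp.toLp 2 f : EuclideanSpace ℝ G) = ∑ i, c i • (B i : EuclideanSpace ℝ G) := by
      have h1 := B.sum_repr fV
      have h2 := congrArg (fun v : ↥V => (v : EuclideanSpace ℝ G)) h1
      simpa using h2.symm
    set r : ℝ := Real.exp (-t / X) with hr
    set e : Fin nV → ℝ := fun i => Real.exp (t * (μ i - 1)) with he
    have hM : ∀ i, (t • (transMatrix S - 1)).mulVec ((B i : EuclideanSpace ℝ G))
        = (t * (μ i - 1)) • ((B i : EuclideanSpace ℝ G)) := by
      intro i
      rw [Matrix.smul_mulVec, Matrix.sub_mulVec, Matrix.one_mulVec, heig i]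
      funext x
      simp only [Pi.smul_apply, PiLp.smul_apply, Pi.sub_apply, smul_eq_mul]
      ring
    have hexp : ∀ i, (heatKernel S t).mulVec ((B i : EuclideanSpace ℝ G))
        = e i • ((B i : EuclideanSpace ℝ G)) := by
      intro i
      exact exp_mulVec_eig (t • (transMatrix S - 1)) _ _ (hM i)
    have hPt : (heatKernel S t).mulVec f
        = ∑ i, (c i * e i) • (B i : EuclideanSpace ℝ G) := by
      have h0 : (heatKernel S t).mulVec f
          = (heatKernel S t).mulVec (∑ i, c i • (B i : EuclideanSpace ℝ G)) := by
        exact congrArg _ (by simpa [WithLp.ofLp_sum] using congrArg WithLp.ofLp hfsum)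
      rw [h0]
      have h1 := map_sum (heatKernel S t).mulVecLin
        (fun i => c i • ((B i : EuclideanSpace ℝ G) : G → ℝ)) Finset.univ
      rw [show (heatKernel S t).mulVec (∑ i, c i • (B i : EuclideanSpace ℝ G))
          = ∑ i, (heatKernel S t).mulVec (c i • (B i : EuclideanSpace ℝ G)) from h1]
      rw [WithLp.ofLp_sum]
      refine Finset.sum_congr rfl fun i _ => ?_
      rw [Matrix.mulVec_smul, hexp i, smul_smul]
      rfl
    have hONB : Orthonormal ℝ (fun i => (B i : EuclideanSpace ℝ G)) := by
      constructor
      · intro i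
        exact B.orthonormal.1 i
      · intro i j hij
        exact B.orthonormal.2 hij
    have hsumsq : ∀ u : EuclideanSpace ℝ G, ∑ x : G, u x ^ 2 = (inner ℝ u u : ℝ) := by
      intro u
      rw [hinnerE]
      exact Finset.sum_congr rfl fun x _ => sq (u x)
    have hnorm1 : ∑ x : G, ((heatKernel S t).mulVec f) x ^ 2 = ∑ i, (c i * e i) ^ 2 := by
      rw [show ∑ x : G, ((heatKernel S t).mulVec f) x ^ 2 = _ from
        hsumsq (WithLp.toLp 2 ((heatKernel S t).mulVec f))]
      rw [show (WithLp.toLp 2 ((heatKernel S t).mulVec f) : EuclideanSpace ℝ G)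
        = ∑ i, (c i * e i) • (B i : EuclideanSpace ℝ G) from by rw [hPt]]
      rw [hONB.inner_sum]
      exact Finset.sum_congr rfl fun i _ => by
        simp [sq]
    have hnorm2 : ∑ x : G, f x ^ 2 = ∑ i, c i ^ 2 := by
      rw [show ∑ x : G, f x ^ 2 = _ from hsumsq (WithLp.toLp 2 f)]
      rw [show (WithLp.toLp 2 f : EuclideanSpace ℝ G) = ∑ i, c i • (B i : EuclideanSpace ℝ G) from hfsum]
      rw [hONB.inner_sum]
      exact Finset.sum_congr rfl fun i _ => by simp [sq]
    have hbound : ∑ x : G, ((heatKernel S t).mulVec f) x ^ 2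
        ≤ (∑ x : G, f x ^ 2) * r ^ 2 := by
      rw [hnorm1, hnorm2, Finset.sum_mul]
      refine Finset.sum_le_sum fun i _ => ?_
      have her : e i ≤ r := by
        rw [he, hr]
        apply Real.exp_le_exp.mpr
        have h1 : μ i - 1 ≤ -(1 / X) := by linarith [gap i]
        calc t * (μ i - 1) ≤ t * (-(1 / X)) :=
              mul_le_mul_of_nonneg_left h1 ht
          _ = -t / X := by ring
      have hepos : 0 ≤ e i := Real.exp_nonneg _
      calc (c i * e i) ^ 2 = c i ^ 2 * e i ^ 2 := by ring
        _ ≤ c i ^ 2 * r ^ 2 := by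
            refine mul_le_mul_of_nonneg_left ?_ (sq_nonneg _)
            exact pow_le_pow_left₀ hepos her 2
    -- final sqrt manipulation
    have hlosq : ∀ x : G, ∑ y : G, heatKernel S t x y * f y = ((heatKernel S t).mulVec f) x :=
      fun x => rfl
    simp only [hlosq]
    have hcardpos : (0 : ℝ) < (Fintype.card G : ℝ) := by exact_mod_cast Fintype.card_pos
    have hfrac : (∑ x : G, ((heatKernel S t).mulVec f) x ^ 2) / (Fintype.card G : ℝ)
        ≤ ((∑ x : G, f x ^ 2) / (Fintype.card G : ℝ)) * r ^ 2 := by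
      rw [div_mul_eq_mul_div]
      exact div_le_div_of_nonneg_right hbound hcardpos.le |>.trans_eq rfl
    calc Real.sqrt ((∑ x : G, ((heatKernel S t).mulVec f) x ^ 2) / (Fintype.card G : ℝ))
        ≤ Real.sqrt (((∑ x : G, f x ^ 2) / (Fintype.card G : ℝ)) * r ^ 2) :=
          Real.sqrt_le_sqrt hfrac
      _ = Real.sqrt ((∑ x : G, f x ^ 2) / (Fintype.card G : ℝ)) * r := by
          rw [Real.sqrt_mul (by positivity) (r ^ 2), Real.sqrt_sq (Real.exp_nonneg _)]


end
end
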